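/- arXiv:1906.05994 — 3 statements merged into one kernel-verified Lean document; each statement's English description precedes it below -/
import Mathlib

section
/- The optimal value of the SVM primal problem equals the optimal value of its dual quadratic program. Precisely: the infimum over all primal-feasible (w, ξ, b) of (1/2)‖w‖² + C·∑_{d=1}^{Γ} ξ_d equals the supremum, over all a ∈ ℝ^Γ satisfying 0 ≤ a_d ≤ C for every d and ∑_{d=1}^{Γ} a_d·l_d = 0, of ∑_{d=1}^{Γ} a_d − (1/2)·∑_{d=1}^{Γ}∑_{d'=1}^{Γ} l_d·l_{d'}·a_d·a_{d'}·⟨φ_d, φ_{d'}⟩. -/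
open RealInnerProductSpace

section SVMAux

variable {H : Type*} [NormedAddCommGroup H] [InnerProductSpace ℝ H]
variable {Γ : ℕ}

noncomputable def svmW (φ : Fin Γ → H) (l : Fin Γ → ℝ) (a : Fin Γ → ℝ) : H :=
  ∑ d, (a d * l d) • φ d

lemma inner_svmW (φ : Fin Γ → H) (l : Fin Γ → ℝ) (w : H) (a : Fin Γ → ℝ) :
    ⟪w, svmW φ l a⟫ = ∑ d, a d * l d * ⟪w, φ d⟫ := by
  simp [svmW, inner_sum, real_inner_smul_right]

lemma gram_eq (φ : Fin Γ → H) (l : Fin Γ → ℝ) (a : Fin Γ → ℝ) :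
    ∑ d, ∑ d', l d * l d' * a d * a d' * ⟪φ d, φ d'⟫ = ‖svmW φ l a‖^2 := by
  rw [← real_inner_self_eq_norm_sq, inner_svmW]
  unfold svmW
  simp only [sum_inner, real_inner_smul_left, Finset.mul_sum, Finset.sum_mul]
  rw [Finset.sum_comm]
  apply Finset.sum_congr rfl; intro d _
  apply Finset.sum_congr rfl; intro d' _
  ring

lemma svmW_add_smul (φ : Fin Γ → H) (l : Fin Γ → ℝ) (a v : Fin Γ → ℝ) (t : ℝ) :
    svmW φ l (a + t • v) = svmW φ l a + t • svmW φ l v := by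
  simp only [svmW, Finset.smul_sum, ← Finset.sum_add_distrib]
  apply Finset.sum_congr rfl
  intro d _
  simp only [Pi.add_apply, Pi.smul_apply, smul_smul]
  rw [← add_smul]
  congr 1
  simp [smul_eq_mul]
  ring

lemma weak_duality (φ : Fin Γ → H) (l : Fin Γ → ℝ) (C : ℝ)
    (a : Fin Γ → ℝ) (ha : ∀ d, 0 ≤ a d ∧ a d ≤ C) (hal : ∑ d, a d * l d = 0)
    (w : H) (ξ : Fin Γ → ℝ) (b : ℝ)
    (hfeas : ∀ d, l d * (⟪w, φ d⟫ + b) ≥ 1 - ξ d) (hξ : ∀ d, 0 ≤ ξ d) :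
    ∑ d, a d - (1 / 2) * ∑ d, ∑ d', l d * l d' * a d * a d' * ⟪φ d, φ d'⟫
      ≤ (1 / 2) * ‖w‖ ^ 2 + C * ∑ d, ξ d := by
  rw [gram_eq]
  have h1 : ∑ d, a d ≤ ∑ d, a d * (ξ d + l d * (⟪w, φ d⟫ + b)) := by
    apply Finset.sum_le_sum
    intro d _
    have := hfeas d
    have := (ha d).1
    nlinarith
  have h2 : ∑ d, a d * (ξ d + l d * (⟪w, φ d⟫ + b))
      = ∑ d, a d * ξ d + ⟪w, svmW φ l a⟫ + b * ∑ d, a d * l d := by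
    rw [inner_svmW, Finset.mul_sum, ← Finset.sum_add_distrib, ← Finset.sum_add_distrib]
    apply Finset.sum_congr rfl
    intro d _
    ring
  have h3 : ∑ d, a d * ξ d ≤ C * ∑ d, ξ d := by
    rw [Finset.mul_sum]
    apply Finset.sum_le_sum
    intro d _
    exact mul_le_mul_of_nonneg_right (ha d).2 (hξ d)
  have h4 : ⟪w, svmW φ l a⟫ ≤ (1/2) * ‖w‖^2 + (1/2) * ‖svmW φ l a‖^2 := by
    have h5 : 0 ≤ ‖w - svmW φ l a‖^2 := sq_nonneg _
    rw [norm_sub_sq_real] at h5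
    nlinarith
  rw [hal] at h2
  nlinarith [h4]


lemma directional (hΓ : 0 < Γ) (φ : Fin Γ → H) (l : Fin Γ → ℝ) (C : ℝ)
    (a : Fin Γ → ℝ) (ha : ∀ d, 0 ≤ a d ∧ a d ≤ C)
    (hmax : ∀ a' : Fin Γ → ℝ, (∀ d, 0 ≤ a' d ∧ a' d ≤ C) → (∑ d, a' d * l d = 0) →
      ∑ d, a' d - (1/2) * ‖svmW φ l a'‖^2 ≤ ∑ d, a d - (1/2) * ‖svmW φ l a‖^2)
    (hal : ∑ d, a d * l d = 0)
    (v : Fin Γ → ℝ) (hv1 : ∀ d, 0 < v d → a d < C) (hv2 : ∀ d, v d < 0 → 0 < a d)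
    (hvl : ∑ d, v d * l d = 0) :
    ∑ d, v d * (1 - l d * ⟪svmW φ l a, φ d⟫) ≤ 0 := by
  haveI : Nonempty (Fin Γ) := ⟨⟨0, hΓ⟩⟩
  set N := ‖svmW φ l v‖^2 with hN
  have hN0 : 0 ≤ N := sq_nonneg _
  -- per-coordinate step sizes
  set εd : Fin Γ → ℝ := fun d =>
    if h : 0 < v d then (C - a d)/v d else if h2 : v d < 0 then a d / (-v d) else 1 with hεd
  have hεdpos : ∀ d, 0 < εd d := by
    intro d
    simp only [hεd]
    split_ifs with h h2
    · exact div_pos (sub_pos.mpr (hv1 d h)) h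
    · exact div_pos (hv2 d h2) (by linarith)
    · norm_num
  set ε : ℝ := Finset.univ.inf' Finset.univ_nonempty εd with hε
  have hεpos : 0 < ε := by
    rw [hε, Finset.lt_inf'_iff]
    exact fun d _ => hεdpos d
  have hfeas : ∀ t : ℝ, 0 < t → t ≤ ε → ∀ d, 0 ≤ a d + t * v d ∧ a d + t * v d ≤ C := by
    intro t ht htε d
    have hd : ε ≤ εd d := Finset.inf'_le _ (Finset.mem_univ d)
    have htd : t ≤ εd d := le_trans htε hd
    rcases lt_trichotomy (v d) 0 with hv | hv | hv
    · have h1 : 0 < a d := hv2 d hv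
      have : εd d = a d / (-v d) := by
        simp only [hεd]; rw [dif_neg (by linarith), dif_pos hv]
      rw [this] at htd
      have : t * (-v d) ≤ a d := by
        rw [div_eq_mul_inv] at htd
        have := mul_le_mul_of_nonneg_right htd (le_of_lt (neg_pos.mpr hv))
        rwa [mul_assoc, inv_mul_cancel₀ (by linarith), mul_one] at this
      constructor
      · nlinarith
      · have := (ha d).2; nlinarith
    · simp [hv]; exact ha d
    · have h1 : a d < C := hv1 d hv
      have : εd d = (C - a d)/v d := by simp only [hεd]; rw [dif_pos hv]
      rw [this] at htd
      have : t * v d ≤ C - a d := by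
        rw [div_eq_mul_inv] at htd
        have := mul_le_mul_of_nonneg_right htd (le_of_lt hv)
        rwa [mul_assoc, inv_mul_cancel₀ (by linarith), mul_one] at this
      constructor
      · have := (ha d).1; nlinarith
      · nlinarith
  set S := ∑ d, v d * (1 - l d * ⟪svmW φ l a, φ d⟫) with hS
  have hSsplit : S = ∑ d, v d - ⟪svmW φ l a, svmW φ l v⟫ := by
    rw [hS, inner_svmW, ← Finset.sum_sub_distrib]
    apply Finset.sum_congr rfl
    intro d _
    ring
  have key : ∀ t : ℝ, 0 < t → t ≤ ε → S ≤ t/2 * N := by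
    intro t ht htε
    have hmem := hfeas t ht htε
    have hsum : ∑ d, (a + t • v) d * l d = 0 := by
      have : ∑ d, (a + t • v) d * l d = ∑ d, a d * l d + t * ∑ d, v d * l d := by
        rw [Finset.mul_sum, ← Finset.sum_add_distrib]
        apply Finset.sum_congr rfl; intro d _
        simp [Pi.add_apply, Pi.smul_apply, smul_eq_mul]; ring
      rw [this, hal, hvl]; ring
    have := hmax (a + t • v) (fun d => by simpa using hmem d) hsum
    rw [svmW_add_smul] at this
    have hexp : ‖svmW φ l a + t • svmW φ l v‖^2
        = ‖svmW φ l a‖^2 + 2 * (t * ⟪svmW φ l a, svmW φ l v⟫) + t^2 * N := by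
      rw [norm_add_sq_real, real_inner_smul_right, norm_smul]
      rw [mul_pow, Real.norm_eq_abs, sq_abs]
    have hsum2 : ∑ d, (a + t • v) d = ∑ d, a d + t * ∑ d, v d := by
      rw [Finset.mul_sum, ← Finset.sum_add_distrib]
      apply Finset.sum_congr rfl; intro d _
      simp [smul_eq_mul]
    rw [hexp, hsum2] at this
    rw [hSsplit]
    nlinarith
  by_contra hcon
  push_neg at hcon
  set t := min ε (S / (N + 1)) with htdef
  have ht0 : 0 < t := lt_min hεpos (div_pos hcon (by linarith))
  have htε : t ≤ ε := min_le_left _ _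
  have h1 := key t ht0 htε
  have h2 : t ≤ S / (N + 1) := min_le_right _ _
  have h3 : t * (N + 1) ≤ S := by
    rw [div_eq_mul_inv] at h2
    have := mul_le_mul_of_nonneg_right h2 (le_of_lt (show (0:ℝ) < N + 1 by linarith))
    rwa [mul_assoc, inv_mul_cancel₀ (by linarith), mul_one] at this
  nlinarith


lemma single_sum (d : Fin Γ) (c : ℝ) (X : Fin Γ → ℝ) :
    ∑ e, (if e = d then c else 0) * X e = c * X d := by
  simp [ite_mul, Finset.sum_ite_eq']

lemma kkt_b (a g l : Fin Γ → ℝ) (C : ℝ)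
    (hdir : ∀ v : Fin Γ → ℝ, (∀ d, 0 < v d → a d < C) → (∀ d, v d < 0 → 0 < a d) →
      (∑ d, v d * l d = 0) → ∑ d, v d * g d ≤ 0) :
    ∃ b : ℝ, (∀ d, a d < C → g d ≤ b * l d) ∧ (∀ d, 0 < a d → b * l d ≤ g d) := by
  set r : Fin Γ → ℝ := fun d => g d / l d with hr
  set LC : Fin Γ → Prop := fun d => (0 < l d ∧ a d < C) ∨ (l d < 0 ∧ 0 < a d) with hLC
  set UC : Fin Γ → Prop := fun d => (0 < l d ∧ 0 < a d) ∨ (l d < 0 ∧ a d < C) with hUC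
  have claimA : ∀ d, l d = 0 → a d < C → g d ≤ 0 := by
    intro d hl hac
    have hc1 : ∀ e : Fin Γ, 0 < (if e = d then (1:ℝ) else 0) → a e < C := by
      intro e he
      by_cases h : e = d
      · subst h; exact hac
      · rw [if_neg h] at he; linarith
    have hc2 : ∀ e : Fin Γ, (if e = d then (1:ℝ) else 0) < 0 → 0 < a e := by
      intro e he
      by_cases h : e = d
      · rw [if_pos h] at he; linarith
      · rw [if_neg h] at he; linarith
    have := hdir (fun e => if e = d then 1 else 0) hc1 hc2
      (by rw [single_sum]; simp [hl])
    rw [single_sum] at this; linarith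
  have claimB : ∀ d, l d = 0 → 0 < a d → 0 ≤ g d := by
    intro d hl hac
    have hc1 : ∀ e : Fin Γ, 0 < (if e = d then (-1:ℝ) else 0) → a e < C := by
      intro e he
      by_cases h : e = d
      · rw [if_pos h] at he; linarith
      · rw [if_neg h] at he; linarith
    have hc2 : ∀ e : Fin Γ, (if e = d then (-1:ℝ) else 0) < 0 → 0 < a e := by
      intro e he
      by_cases h : e = d
      · subst h; exact hac
      · rw [if_neg h] at he; linarith
    have := hdir (fun e => if e = d then -1 else 0) hc1 hc2
      (by rw [single_sum]; simp [hl])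
    rw [single_sum] at this; linarith
  have pair : ∀ d d', LC d → UC d' → r d ≤ r d' := by
    intro d d' hld hud'
    by_cases hdd : d = d'
    · subst hdd; exact le_refl _
    have hl0 : l d ≠ 0 := by
      rcases hld with ⟨h, _⟩ | ⟨h, _⟩; exacts [ne_of_gt h, ne_of_lt h]
    have hl0' : l d' ≠ 0 := by
      rcases hud' with ⟨h, _⟩ | ⟨h, _⟩; exacts [ne_of_gt h, ne_of_lt h]
    set v : Fin Γ → ℝ :=
      fun e => (if e = d then 1 / l d else 0) - (if e = d' then 1 / l d' else 0) with hv
    have hvd : v d = 1 / l d := by simp [hv, hdd]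
    have hvd' : v d' = -(1 / l d') := by simp [hv, Ne.symm hdd]
    have sumv : ∀ X : Fin Γ → ℝ, ∑ e, v e * X e = (1 / l d) * X d - (1 / l d') * X d' := by
      intro X
      have heq : ∀ e, v e * X e =
          (if e = d then 1/l d else 0) * X e - (if e = d' then 1/l d' else 0) * X e := by
        intro e; simp only [hv]; ring
      rw [Finset.sum_congr rfl fun e _ => heq e, Finset.sum_sub_distrib, single_sum, single_sum]
    have hc1 : ∀ e, 0 < v e → a e < C := by
      intro e he
      by_cases h1 : e = d
      · subst h1
        rw [hvd] at he
        have hlpos : 0 < l e := by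
          by_contra hneg
          push_neg at hneg
          have : 1 / l e ≤ 0 := by
            rcases lt_or_eq_of_le hneg with h | h
            · exact le_of_lt (div_neg_of_pos_of_neg one_pos h)
            · simp [h]
          linarith
        rcases hld with ⟨_, h⟩ | ⟨h, _⟩
        · exact h
        · linarith
      by_cases h2 : e = d'
      · subst h2
        rw [hvd'] at he
        have hlneg : l e < 0 := by
          by_contra hneg
          push_neg at hneg
          have : 0 ≤ 1 / l e := by positivity
          linarith
        rcases hud' with ⟨h, _⟩ | ⟨_, h⟩
        · linarith
        · exact h
      · simp [hv, h1, h2] at he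
    have hc2 : ∀ e, v e < 0 → 0 < a e := by
      intro e he
      by_cases h1 : e = d
      · subst h1
        rw [hvd] at he
        have hlneg : l e < 0 := by
          by_contra hneg
          push_neg at hneg
          have : 0 ≤ 1 / l e := by positivity
          linarith
        rcases hld with ⟨h, _⟩ | ⟨_, h⟩
        · linarith
        · exact h
      by_cases h2 : e = d'
      · subst h2
        rw [hvd'] at he
        have hlpos : 0 < l e := by
          by_contra hneg
          push_neg at hneg
          have : 1 / l e ≤ 0 := by
            rcases lt_or_eq_of_le hneg with h | h
            · exact le_of_lt (div_neg_of_pos_of_neg one_pos h)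
            · simp [h]
          linarith
        rcases hud' with ⟨_, h⟩ | ⟨h, _⟩
        · exact h
        · linarith
      · simp [hv, h1, h2] at he
    have hc3 : ∑ e, v e * l e = 0 := by
      rw [sumv]
      field_simp
      ring
    have := hdir v hc1 hc2 hc3
    rw [sumv] at this
    have : g d / l d ≤ g d' / l d' := by
      rw [div_eq_mul_inv, div_eq_mul_inv]
      rw [one_div, one_div] at this
      linarith [this]
    simpa [hr] using this
  -- construct b
  classical
  set Low : Finset (Fin Γ) := Finset.univ.filter LC with hLow
  set Upp : Finset (Fin Γ) := Finset.univ.filter UC with hUpp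
  have hmemL : ∀ d, LC d → d ∈ Low := fun d h => by simp [hLow, h]
  have hmemU : ∀ d, UC d → d ∈ Upp := fun d h => by simp [hUpp, h]
  obtain ⟨b, hbL, hbU⟩ : ∃ b : ℝ, (∀ d, LC d → r d ≤ b) ∧ (∀ d, UC d → b ≤ r d) := by
    by_cases hL : Low.Nonempty
    · refine ⟨Low.sup' hL r, fun d hd => Finset.le_sup' r (hmemL d hd), fun d' hd' => ?_⟩
      exact Finset.sup'_le hL r fun d hd => pair d d' (by simpa [hLow] using hd) hd'
    · by_cases hU : Upp.Nonempty
      · refine ⟨Upp.inf' hU r, fun d hd => absurd (hmemL d hd) (fun h => hL ⟨d, h⟩),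
          fun d' hd' => Finset.inf'_le r (hmemU d' hd')⟩
      · exact ⟨0, fun d hd => absurd (hmemL d hd) (fun h => hL ⟨d, h⟩),
          fun d hd => absurd (hmemU d hd) (fun h => hU ⟨d, h⟩)⟩
  refine ⟨b, ?_, ?_⟩
  · intro d hac
    rcases lt_trichotomy (l d) 0 with hl | hl | hl
    · have := hbU d (Or.inr ⟨hl, hac⟩)
      have hg : r d * l d = g d := by
        simp only [hr]; exact div_mul_cancel₀ _ (ne_of_lt hl)
      nlinarith
    · simpa [hl] using claimA d hl hac
    · have := hbL d (Or.inl ⟨hl, hac⟩)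
      have hg : r d * l d = g d := by
        simp only [hr]; exact div_mul_cancel₀ _ (ne_of_gt hl)
      nlinarith
  · intro d hac
    rcases lt_trichotomy (l d) 0 with hl | hl | hl
    · have := hbL d (Or.inr ⟨hl, hac⟩)
      have hg : r d * l d = g d := by
        simp only [hr]; exact div_mul_cancel₀ _ (ne_of_lt hl)
      nlinarith
    · simpa [hl] using claimB d hl hac
    · have := hbU d (Or.inl ⟨hl, hac⟩)
      have hg : r d * l d = g d := by
        simp only [hr]; exact div_mul_cancel₀ _ (ne_of_gt hl)
      nlinarith

lemma exists_max (φ : Fin Γ → H) (l : Fin Γ → ℝ) (C : ℝ) (hC : 0 ≤ C) :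
    ∃ a : Fin Γ → ℝ, (∀ d, 0 ≤ a d ∧ a d ≤ C) ∧ (∑ d, a d * l d = 0) ∧
      ∀ a' : Fin Γ → ℝ, (∀ d, 0 ≤ a' d ∧ a' d ≤ C) → (∑ d, a' d * l d = 0) →
        ∑ d, a' d - (1/2) * ‖svmW φ l a'‖^2 ≤ ∑ d, a d - (1/2) * ‖svmW φ l a‖^2 := by
  set f : (Fin Γ → ℝ) → ℝ := fun a => ∑ d, a d - (1/2) * ‖svmW φ l a‖^2 with hf
  set K : Set (Fin Γ → ℝ) :=
    Set.Icc 0 (fun _ => C) ∩ {a | ∑ d, a d * l d = 0} with hK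
  have hmem : ∀ a : Fin Γ → ℝ, a ∈ K ↔ ((∀ d, 0 ≤ a d ∧ a d ≤ C) ∧ ∑ d, a d * l d = 0) := by
    intro a
    simp only [hK, Set.mem_inter_iff, Set.mem_Icc, Set.mem_setOf_eq, Pi.le_def]
    constructor
    · rintro ⟨⟨h1, h2⟩, h3⟩
      exact ⟨fun d => ⟨h1 d, h2 d⟩, h3⟩
    · rintro ⟨h1, h3⟩
      exact ⟨⟨fun d => (h1 d).1, fun d => (h1 d).2⟩, h3⟩
  have hKc : IsCompact K := by
    apply IsCompact.inter_right isCompact_Icc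
    exact isClosed_eq (by fun_prop) continuous_const
  have hKne : K.Nonempty := by
    refine ⟨0, (hmem 0).mpr ⟨fun d => ⟨le_refl _, hC⟩, by simp⟩⟩
  have hfc : ContinuousOn f K := by
    apply Continuous.continuousOn
    apply Continuous.sub
    · exact continuous_finset_sum _ fun d _ => continuous_apply d
    · apply Continuous.mul continuous_const
      apply Continuous.pow
      apply Continuous.norm
      exact continuous_finset_sum _ fun d _ =>
        (((continuous_apply d).mul continuous_const).smul continuous_const)
  obtain ⟨a, haK, hmax⟩ := hKc.exists_isMaxOn hKne hfc
  rw [hmem] at haK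
  exact ⟨a, haK.1, haK.2, fun a' h1 h2 => hmax ((hmem a').mpr ⟨h1, h2⟩)⟩

end SVMAux


/-- The optimal value of the SVM primal problem equals the optimal value of its
dual quadratic program. -/
theorem svm_primal_dual_value_eq
    (H : Type*) [NormedAddCommGroup H] [InnerProductSpace ℝ H]
    (Γ : ℕ) (hΓ : 0 < Γ) (φ : Fin Γ → H) (l : Fin Γ → ℝ) (C : ℝ) (hC : 0 ≤ C) :
    sInf {val : ℝ | ∃ (w : H) (ξ : Fin Γ → ℝ) (b : ℝ),
        (∀ d, l d * (⟪w, φ d⟫ + b) ≥ 1 - ξ d) ∧ (∀ d, 0 ≤ ξ d) ∧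
        val = (1 / 2) * ‖w‖ ^ 2 + C * ∑ d, ξ d}
      = sSup {val : ℝ | ∃ a : Fin Γ → ℝ,
        (∀ d, 0 ≤ a d ∧ a d ≤ C) ∧ (∑ d, a d * l d = 0) ∧
        val = ∑ d, a d
          - (1 / 2) * ∑ d, ∑ d', l d * l d' * a d * a d' * ⟪φ d, φ d'⟫} := by
  set P : Set ℝ := {val : ℝ | ∃ (w : H) (ξ : Fin Γ → ℝ) (b : ℝ),
      (∀ d, l d * (⟪w, φ d⟫ + b) ≥ 1 - ξ d) ∧ (∀ d, 0 ≤ ξ d) ∧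
      val = (1 / 2) * ‖w‖ ^ 2 + C * ∑ d, ξ d} with hP
  set D : Set ℝ := {val : ℝ | ∃ a : Fin Γ → ℝ,
      (∀ d, 0 ≤ a d ∧ a d ≤ C) ∧ (∑ d, a d * l d = 0) ∧
      val = ∑ d, a d
        - (1 / 2) * ∑ d, ∑ d', l d * l d' * a d * a d' * ⟪φ d, φ d'⟫} with hD
  -- weak duality between arbitrary members
  have hweak : ∀ p ∈ P, ∀ q ∈ D, q ≤ p := by
    rintro p ⟨w, ξ, b, hfeas, hξ, rfl⟩ q ⟨a, ha, hal, rfl⟩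
    exact weak_duality φ l C a ha hal w ξ b hfeas hξ
  -- optimal dual point
  obtain ⟨a, ha, hal, hmax⟩ := exists_max φ l C hC
  set w : H := svmW φ l a with hw
  set g : Fin Γ → ℝ := fun d => 1 - l d * ⟪w, φ d⟫ with hg
  obtain ⟨b, hb1, hb2⟩ := kkt_b a g l C
    (fun v hv1 hv2 hvl => directional hΓ φ l C a ha hmax hal v hv1 hv2 hvl)
  set ξ : Fin Γ → ℝ := fun d => max 0 (g d - b * l d) with hξdef
  have hξ0 : ∀ d, 0 ≤ ξ d := fun d => le_max_left _ _
  have hfeas : ∀ d, l d * (⟪w, φ d⟫ + b) ≥ 1 - ξ d := by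
    intro d
    have h1 : g d - b * l d ≤ ξ d := le_max_right _ _
    simp only [hg] at h1
    nlinarith [h1]
  -- complementarity
  have comp : ∀ d, C * ξ d = a d * (g d - b * l d) := by
    intro d
    rcases lt_or_eq_of_le (ha d).2 with hlt | heq
    · have h1 := hb1 d hlt
      have hz : ξ d = 0 := by
        simp only [hξdef]
        exact max_eq_left (by linarith)
      rw [hz, mul_zero]
      rcases lt_or_eq_of_le (ha d).1 with hpos | hzero
      · have h2 := hb2 d hpos
        have : g d - b * l d = 0 := by linarith
        rw [this, mul_zero]
      · rw [← hzero, zero_mul]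
    · rcases lt_or_eq_of_le hC with hCpos | hC0
      · have hpos : 0 < a d := by rw [heq]; exact hCpos
        have h2 := hb2 d hpos
        have hz : ξ d = g d - b * l d := by
          simp only [hξdef]
          exact max_eq_right (by linarith)
        rw [hz, heq]
      · have ha0 : a d = 0 := by rw [heq, ← hC0]
        rw [ha0, ← hC0]
        ring
  -- value equality
  have hCsum : C * ∑ d, ξ d = ∑ d, a d - ‖w‖^2 := by
    have h1 : C * ∑ d, ξ d = ∑ d, a d * (g d - b * l d) := by
      rw [Finset.mul_sum]
      exact Finset.sum_congr rfl fun d _ => comp d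
    have h2 : ∑ d, a d * (g d - b * l d)
        = ∑ d, a d * g d - b * ∑ d, a d * l d := by
      rw [Finset.mul_sum, ← Finset.sum_sub_distrib]
      exact Finset.sum_congr rfl fun d _ => by ring
    have h3 : ∑ d, a d * g d = ∑ d, a d - ∑ d, a d * l d * ⟪w, φ d⟫ := by
      rw [← Finset.sum_sub_distrib]
      exact Finset.sum_congr rfl fun d _ => by simp only [hg]; ring
    have h4 : ∑ d, a d * l d * ⟪w, φ d⟫ = ‖w‖^2 := by
      rw [← inner_svmW φ l w a, ← hw, real_inner_self_eq_norm_sq]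
    rw [h1, h2, h3, h4, hal]
    ring
  set p0 : ℝ := (1 / 2) * ‖w‖ ^ 2 + C * ∑ d, ξ d with hp0
  set q0 : ℝ := ∑ d, a d
    - (1 / 2) * ∑ d, ∑ d', l d * l d' * a d * a d' * ⟪φ d, φ d'⟫ with hq0
  have hp0P : p0 ∈ P := ⟨w, ξ, b, hfeas, hξ0, rfl⟩
  have hq0D : q0 ∈ D := ⟨a, ha, hal, rfl⟩
  have hpq : p0 = q0 := by
    rw [hp0, hq0, gram_eq φ l a, ← hw]
    linarith [hCsum]
  have hPne : P.Nonempty := ⟨p0, hp0P⟩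
  have hDne : D.Nonempty := ⟨q0, hq0D⟩
  have hPbdd : BddBelow P := ⟨q0, fun p hp => hweak p hp q0 hq0D⟩
  have hDbdd : BddAbove D := ⟨p0, fun q hq => hweak p0 hp0P q hq⟩
  apply le_antisymm
  · calc sInf P ≤ p0 := csInf_le hPbdd hp0P
      _ = q0 := hpq
      _ ≤ sSup D := le_csSup hDbdd hq0D
  · exact csSup_le hDne fun q hq => le_csInf hPne fun p hp => hweak p hp q hq
end

section
/- Strong duality holds for the SVM primal problem: computing values in the extended reals, the supremum over all multipliers a, v ∈ ℝ^Γ with a ≥ 0 and v ≥ 0 of the infimum over all (w, ξ, b) ∈ H × ℝ^Γ × ℝ of the Lagrangian L(w, ξ, b; a, v) equals the infimum, over all primal-feasible (w, ξ, b), of the primal objective (1/2)‖w‖² + C·∑_{d=1}^{Γ} ξ_d. -/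
set_option maxHeartbeats 1000000

open RealInnerProductSpace



lemma svm_aux_fdecomp {n : ℕ} (f : ((Fin n → ℝ) × (Fin n → ℝ) × ℝ) →L[ℝ] ℝ) (u s : Fin n → ℝ) (t : ℝ) :
    f (u, s, t) = ∑ d, u d * f (Pi.single d 1, 0, 0) + ∑ d, s d * f (0, Pi.single d 1, 0)
      + t * f (0, 0, 1) := by
  have h : (u, s, t) = (∑ d, u d • ((Pi.single d 1 : Fin n → ℝ), (0:Fin n → ℝ), (0:ℝ)))
      + (∑ d, s d • ((0:Fin n → ℝ), (Pi.single d 1 : Fin n → ℝ), (0:ℝ)))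
      + t • ((0:Fin n → ℝ), (0:Fin n → ℝ), (1:ℝ)) := by
    refine Prod.ext ?_ (Prod.ext ?_ ?_) <;>
      simp [Prod.fst_sum, Prod.snd_sum] <;> funext j <;>
      simp [Pi.single_apply, Finset.sum_apply, mul_comm]
  rw [h]
  simp only [map_add, map_sum, map_smul, smul_eq_mul]

lemma svm_combo_lt {a b c d θ θ' : ℝ} (h1 : a < c) (h2 : b < d)
    (hθ : 0 ≤ θ) (hθ' : 0 ≤ θ') (hs : θ + θ' = 1) :
    θ * a + θ' * b < θ * c + θ' * d := by
  rcases eq_or_lt_of_le hθ with h | h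
  · have hθ1 : θ' = 1 := by linarith
    subst hθ1; rw [← h]; linarith
  · nlinarith [mul_pos h (sub_pos.2 h1), mul_nonneg hθ' (sub_pos.2 h2).le]

lemma svm_key
    (H : Type*) [NormedAddCommGroup H] [InnerProductSpace ℝ H]
    (Γ : ℕ) (φ : Fin Γ → H) (l : Fin Γ → ℝ) (C : ℝ) (hC : 0 ≤ C) (x : ℝ)
    (hx : ∀ p : H × (Fin Γ → ℝ) × ℝ,
      (∀ d, l d * (⟪p.1, φ d⟫ + p.2.2) ≥ 1 - p.2.1 d) → (∀ d, 0 ≤ p.2.1 d) →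
      x ≤ (1 / 2) * ‖p.1‖ ^ 2 + C * ∑ d, p.2.1 d) :
    ∃ a v : Fin Γ → ℝ, (∀ d, 0 ≤ a d) ∧ (∀ d, 0 ≤ v d) ∧
      ∀ p : H × (Fin Γ → ℝ) × ℝ,
        x ≤ (1 / 2) * ‖p.1‖ ^ 2 + C * ∑ d, p.2.1 d
          - ∑ d, a d * (l d * (⟪p.1, φ d⟫ + p.2.2) - 1 + p.2.1 d)
          - ∑ d, v d * p.2.1 d := by
  classical
  set obj : H × (Fin Γ → ℝ) × ℝ → ℝ := fun p => (1/2) * ‖p.1‖^2 + C * ∑ d, p.2.1 d with hobj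
  set g : H × (Fin Γ → ℝ) × ℝ → Fin Γ → ℝ :=
    fun p d => 1 - p.2.1 d - l d * (⟪p.1, φ d⟫ + p.2.2) with hg
  set B : Set ((Fin Γ → ℝ) × (Fin Γ → ℝ) × ℝ) :=
    {z | ∃ p : H × (Fin Γ → ℝ) × ℝ,
      (∀ d, g p d < z.1 d) ∧ (∀ d, -p.2.1 d < z.2.1 d) ∧ obj p < z.2.2} with hB
  -- openness
  have hBo : IsOpen B := by
    have hBU : B = ⋃ p : H × (Fin Γ → ℝ) × ℝ,
        ((⋂ d, {z : (Fin Γ → ℝ) × (Fin Γ → ℝ) × ℝ | g p d < z.1 d}) ∩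
         ((⋂ d, {z : (Fin Γ → ℝ) × (Fin Γ → ℝ) × ℝ | -p.2.1 d < z.2.1 d}) ∩
          {z : (Fin Γ → ℝ) × (Fin Γ → ℝ) × ℝ | obj p < z.2.2})) := by
      ext z
      simp only [hB, Set.mem_setOf_eq, Set.mem_iUnion, Set.mem_inter_iff, Set.mem_iInter]
    rw [hBU]
    refine isOpen_iUnion fun p => ?_
    refine IsOpen.inter (isOpen_iInter_of_finite fun d => ?_)
      (IsOpen.inter (isOpen_iInter_of_finite fun d => ?_) ?_)
    · exact isOpen_lt continuous_const ((continuous_apply d).comp continuous_fst)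
    · exact isOpen_lt continuous_const
        ((continuous_apply d).comp (continuous_fst.comp continuous_snd))
    · exact isOpen_lt continuous_const (continuous_snd.comp continuous_snd)
  -- convexity
  have hBc : Convex ℝ B := by
    rintro z ⟨p, hp1, hp2, hp3⟩ z' ⟨q, hq1, hq2, hq3⟩ θ θ' hθ hθ' hθθ
    refine ⟨(θ • p.1 + θ' • q.1, θ • p.2.1 + θ' • q.2.1, θ * p.2.2 + θ' * q.2.2), ?_, ?_, ?_⟩
    · intro d
      simp only [Prod.fst_add, Prod.smul_fst, Pi.add_apply, Pi.smul_apply, smul_eq_mul]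
      have hin : ⟪θ • p.1 + θ' • q.1, φ d⟫ = θ * ⟪p.1, φ d⟫ + θ' * ⟪q.1, φ d⟫ := by
        rw [inner_add_left, real_inner_smul_left, real_inner_smul_left]
      have hcl := svm_combo_lt (hp1 d) (hq1 d) hθ hθ' hθθ
      have hEq : g (θ • p.1 + θ' • q.1, θ • p.2.1 + θ' • q.2.1, θ * p.2.2 + θ' * q.2.2) d
          = θ * g p d + θ' * g q d := by
        simp only [hg, hin, Pi.add_apply, Pi.smul_apply, smul_eq_mul]
        linear_combination (-1 : ℝ) * hθθ
      rw [hEq]; linarith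
    · intro d
      simp only [Prod.snd_add, Prod.smul_snd, Prod.fst_add, Prod.smul_fst,
        Pi.add_apply, Pi.smul_apply, smul_eq_mul]
      have hcl := svm_combo_lt (hp2 d) (hq2 d) hθ hθ' hθθ
      linarith
    · simp only [Prod.snd_add, Prod.smul_snd, Prod.fst_add, Prod.smul_fst, smul_eq_mul]
      have hnorm : ‖θ • p.1 + θ' • q.1‖ ≤ θ * ‖p.1‖ + θ' * ‖q.1‖ := by
        refine (norm_add_le _ _).trans ?_
        rw [norm_smul, norm_smul, Real.norm_eq_abs, Real.norm_eq_abs,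
          abs_of_nonneg hθ, abs_of_nonneg hθ']
      have hsq : (1/2) * ‖θ • p.1 + θ' • q.1‖^2
          ≤ θ * ((1/2) * ‖p.1‖^2) + θ' * ((1/2) * ‖q.1‖^2) := by
        nlinarith [norm_nonneg (θ • p.1 + θ' • q.1), norm_nonneg p.1, norm_nonneg q.1,
          mul_nonneg (mul_nonneg hθ hθ') (sq_nonneg (‖p.1‖ - ‖q.1‖)),
          mul_self_le_mul_self (norm_nonneg _) hnorm]
      have hsum : ∑ d, (θ • p.2.1 + θ' • q.2.1) d
          = θ * ∑ d, p.2.1 d + θ' * ∑ d, q.2.1 d := by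
        simp [Finset.sum_add_distrib, Finset.mul_sum]
      have hcl := svm_combo_lt hp3 hq3 hθ hθ' hθθ
      have h1 : obj (θ • p.1 + θ' • q.1, θ • p.2.1 + θ' • q.2.1, θ * p.2.2 + θ' * q.2.2)
          = (1/2) * ‖θ • p.1 + θ' • q.1‖^2 + C * (θ * ∑ d, p.2.1 d + θ' * ∑ d, q.2.1 d) := by
        simp only [hobj, hsum]
      have h2 : θ * obj p + θ' * obj q
          = θ * ((1/2) * ‖p.1‖^2) + θ' * ((1/2) * ‖q.1‖^2)
            + C * (θ * ∑ d, p.2.1 d + θ' * ∑ d, q.2.1 d) := by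
        simp only [hobj]; ring
      rw [h1]; linarith [h2 ▸ hcl]
  -- the point to separate
  have hx0B : ((fun _ => (0:ℝ)), (fun _ => (0:ℝ)), x) ∉ B := by
    rintro ⟨p, h1, h2, h3⟩
    have hfeas1 : ∀ d, l d * (⟪p.1, φ d⟫ + p.2.2) ≥ 1 - p.2.1 d := by
      intro d; have hh := h1 d; simp only [hg] at hh
      have hh2 : g p d < 0 := hh
      simp only [hg] at hh2; linarith
    have hfeas2 : ∀ d, 0 ≤ p.2.1 d := by
      intro d; have hh : -p.2.1 d < (0:ℝ) := h2 d; linarith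
    have hle := hx p hfeas1 hfeas2
    have h3' : obj p < x := h3
    simp only [hobj] at h3'
    linarith
  obtain ⟨f, hf⟩ := geometric_hahn_banach_open_point hBc hBo hx0B
  set a : Fin Γ → ℝ := fun d => -f (Pi.single d 1, 0, 0) with ha_def
  set v : Fin Γ → ℝ := fun d => -f (0, Pi.single d 1, 0) with hv_def
  set m : ℝ := -f (0, 0, 1) with hm_def
  have hfz : ∀ z : (Fin Γ → ℝ) × (Fin Γ → ℝ) × ℝ,
      f z = -((∑ d, a d * z.1 d) + (∑ d, v d * z.2.1 d) + m * z.2.2) := by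
    intro z
    have := svm_aux_fdecomp f z.1 z.2.1 z.2.2
    simp only [ha_def, hv_def, hm_def] at *
    rw [show z = (z.1, z.2.1, z.2.2) from rfl] at this ⊢
    rw [this]
    ring_nf
    rw [Finset.sum_congr rfl (fun d _ => by ring : ∀ d ∈ Finset.univ,
      z.1 d * f (Pi.single d 1, 0, 0) = -((-f (Pi.single d 1, 0, 0)) * z.1 d)),
      Finset.sum_congr rfl (fun d _ => by ring : ∀ d ∈ Finset.univ,
      z.2.1 d * f (0, Pi.single d 1, 0) = -((-f (0, Pi.single d 1, 0)) * z.2.1 d))]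
    simp [Finset.sum_neg_distrib]
    ring
  have hfx0 : f ((fun _ => (0:ℝ)), (fun _ => (0:ℝ)), x) = -(m * x) := by
    rw [hfz]; simp
  -- key inequality
  have hkey : ∀ z ∈ B, m * x < (∑ d, a d * z.1 d) + (∑ d, v d * z.2.1 d) + m * z.2.2 := by
    intro z hz
    have := hf z hz
    rw [hfz z, hfx0] at this
    linarith
  clear_value a v m
  -- generic membership
  have hmem : ∀ (u s : Fin Γ → ℝ) (t : ℝ), (∀ d, -1 < u d) → (∀ d, -2 < s d) →
      (C * (2 * Γ) < t) → (u, s, t) ∈ B := by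
    intro u s t hu hs ht
    refine ⟨(0, fun _ => 2, 0), ?_, ?_, ?_⟩
    · intro d
      simp only [hg, inner_zero_left]
      have := hu d; norm_num; linarith
    · intro d; have := hs d; norm_num; linarith
    · simp only [hobj]
      simp [Finset.sum_const, Finset.card_univ, mul_comm]
      linarith [ht]
  set T : ℝ := C * (2 * Γ) + 1 with hT
  have hTgt : C * (2 * Γ) < T := by simp [hT]
  -- nonnegativity of multipliers
  have ham : ∀ d, 0 ≤ a d := by
    intro d
    by_contra hneg
    push_neg at hneg
    set R : ℝ := max ((m * x - (∑ e, v e * (0:ℝ)) - m * T) / a d) 0 with hR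
    have hRnn : 0 ≤ R := le_max_right _ _
    have hz : ((Pi.single d R : Fin Γ → ℝ), (fun _ => (0:ℝ)), T) ∈ B := by
      refine hmem _ _ _ (fun e => ?_) (fun e => by norm_num) hTgt
      rcases eq_or_ne e d with rfl | he
      · simp only [Pi.single_eq_same]; linarith
      · simp only [Pi.single_eq_of_ne he]; norm_num
    have hk := hkey _ hz
    simp only at hk
    have hsum1 : (∑ e, a e * (Pi.single d R : Fin Γ → ℝ) e) = a d * R := by
      rw [Finset.sum_eq_single_of_mem d (Finset.mem_univ d)
        (fun e _ he => by simp [Pi.single_apply, he])]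
      simp
    have hsum2 : (∑ e, v e * ((fun _ => (0:ℝ)) e : ℝ)) = 0 := by simp
    rw [hsum1, hsum2] at hk
    -- hk : m * x < a d * R + 0 + m * T
    have hq : a d * ((m * x - 0 - m * T) / a d) = m * x - 0 - m * T :=
      mul_div_cancel₀ _ (ne_of_lt hneg)
    have hRge : (m * x - 0 - m * T) / a d ≤ R := by
      rw [hR]; simp
    have : a d * R ≤ a d * ((m * x - 0 - m * T) / a d) :=
      mul_le_mul_of_nonpos_left hRge (le_of_lt hneg)
    rw [hq] at this
    linarith
  have hvm : ∀ d, 0 ≤ v d := by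
    intro d
    by_contra hneg
    push_neg at hneg
    set R : ℝ := max ((m * x - m * T) / v d) 0 with hR
    have hRnn : 0 ≤ R := le_max_right _ _
    have hz : ((fun _ => (0:ℝ)), (Pi.single d R : Fin Γ → ℝ), T) ∈ B := by
      refine hmem _ _ _ (fun e => by norm_num) (fun e => ?_) hTgt
      rcases eq_or_ne e d with rfl | he
      · simp only [Pi.single_eq_same]; linarith
      · simp only [Pi.single_eq_of_ne he]; norm_num
    have hk := hkey _ hz
    simp only at hk
    have hsum1 : (∑ e, v e * (Pi.single d R : Fin Γ → ℝ) e) = v d * R := by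
      rw [Finset.sum_eq_single_of_mem d (Finset.mem_univ d)
        (fun e _ he => by simp [Pi.single_apply, he])]
      simp
    have hsum2 : (∑ e, a e * ((fun _ => (0:ℝ)) e : ℝ)) = 0 := by simp
    rw [hsum1, hsum2] at hk
    have hq : v d * ((m * x - m * T) / v d) = m * x - m * T :=
      mul_div_cancel₀ _ (ne_of_lt hneg)
    have hRge : (m * x - m * T) / v d ≤ R := by rw [hR]; simp
    have : v d * R ≤ v d * ((m * x - m * T) / v d) :=
      mul_le_mul_of_nonpos_left hRge (le_of_lt hneg)
    rw [hq] at this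
    linarith
  have hmnn : 0 ≤ m := by
    by_contra hneg
    push_neg at hneg
    set t : ℝ := max (x + 1) T with ht
    have htT : C * (2 * Γ) < t := lt_of_lt_of_le hTgt (le_max_right _ _)
    have hz : ((fun _ => (0:ℝ)), (fun _ => (0:ℝ)), t) ∈ B :=
      hmem _ _ _ (fun e => by norm_num) (fun e => by norm_num) htT
    have hk := hkey _ hz
    simp only at hk
    have hsum1 : (∑ e, a e * ((fun _ => (0:ℝ)) e : ℝ)) = 0 := by simp
    have hsum2 : (∑ e, v e * ((fun _ => (0:ℝ)) e : ℝ)) = 0 := by simp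
    rw [hsum1, hsum2] at hk
    -- hk : m * x < 0 + 0 + m * t, with t > x and m < 0 ⇒ m*t < m*x
    have hxt : x < t := lt_of_lt_of_le (by linarith) (le_max_left _ _)
    nlinarith
  have hmpos : 0 < m := by
    rcases lt_or_eq_of_le hmnn with h | h
    · exact h
    · exfalso
      have hz : ((fun _ => (-1/2 : ℝ)), (fun _ => (-1:ℝ)), T) ∈ B :=
        hmem _ _ _ (fun e => by norm_num) (fun e => by norm_num) hTgt
      have hk := hkey _ hz
      simp only at hk
      rw [← h] at hk
      have h1 : (∑ e, a e * ((-1:ℝ)/2)) ≤ 0 :=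
        Finset.sum_nonpos fun e _ => by
          have he : (0:ℝ) ≤ a e * (1/2) := mul_nonneg (ham e) (by norm_num)
          nlinarith
      have h2 : (∑ e, v e * (-1:ℝ)) ≤ 0 :=
        Finset.sum_nonpos fun e _ => by
          have he : (0:ℝ) ≤ v e * 1 := mul_nonneg (hvm e) (by norm_num)
          nlinarith
      nlinarith [hk, h1, h2]
  -- final multipliers
  refine ⟨fun d => a d / m, fun d => v d / m,
    fun d => div_nonneg (ham d) hmnn, fun d => div_nonneg (hvm d) hmnn, ?_⟩
  intro p
  -- limit argument
  have hA : m * x ≤ (∑ d, a d * g p d) + (∑ d, v d * (-p.2.1 d)) + m * obj p := by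
    set A : ℝ := (∑ d, a d * g p d) + (∑ d, v d * (-p.2.1 d)) + m * obj p with hAdef
    by_contra hcon
    push_neg at hcon
    set K : ℝ := (∑ d, a d) + (∑ d, v d) + m with hK
    have hKpos : 0 < K := by
      have h1 : 0 ≤ ∑ d, a d := Finset.sum_nonneg fun d _ => ham d
      have h2 : 0 ≤ ∑ d, v d := Finset.sum_nonneg fun d _ => hvm d
      rw [hK]; linarith
    set δ : ℝ := (m * x - A) / (2 * K) with hδ
    have hδpos : 0 < δ := div_pos (by linarith) (by linarith)
    have hz : ((fun d => g p d + δ), (fun d => -p.2.1 d + δ), obj p + δ) ∈ B := by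
      refine ⟨p, fun d => ?_, fun d => ?_, ?_⟩
      · show g p d < g p d + δ; linarith
      · show -p.2.1 d < -p.2.1 d + δ; linarith
      · show obj p < obj p + δ; linarith
    have hk := hkey _ hz
    simp only at hk
    have he1 : (∑ d, a d * (g p d + δ)) = (∑ d, a d * g p d) + δ * (∑ d, a d) := by
      rw [Finset.mul_sum]
      rw [← Finset.sum_add_distrib]
      exact Finset.sum_congr rfl fun d _ => by ring
    have he2 : (∑ d, v d * (-p.2.1 d + δ)) = (∑ d, v d * (-p.2.1 d)) + δ * (∑ d, v d) := by
      rw [Finset.mul_sum, ← Finset.sum_add_distrib]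
      exact Finset.sum_congr rfl fun d _ => by ring
    rw [he1, he2] at hk
    -- hk : m * x < A + δ * K
    have hδK : δ * K = (m * x - A) / 2 := by
      rw [hδ]; field_simp
    have hexp : ((∑ d, a d * g p d) + δ * (∑ d, a d))
        + ((∑ d, v d * (-p.2.1 d)) + δ * (∑ d, v d)) + m * (obj p + δ)
        = A + δ * K := by
      rw [hAdef, hK]; ring
    rw [hexp, hδK] at hk
    clear_value A δ K
    linarith
  -- divide by m
  have hdiv : x ≤ ((∑ d, a d * g p d) + (∑ d, v d * (-p.2.1 d)) + m * obj p) / m := by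
    rw [le_div_iff₀ hmpos]; linarith [hA]
  have heq : ((∑ d, a d * g p d) + (∑ d, v d * (-p.2.1 d)) + m * obj p) / m
      = obj p - ∑ d, (a d / m) * (l d * (⟪p.1, φ d⟫ + p.2.2) - 1 + p.2.1 d)
        - ∑ d, (v d / m) * p.2.1 d := by
    have e1 : ∑ d, (a d / m) * (l d * (⟪p.1, φ d⟫ + p.2.2) - 1 + p.2.1 d)
        = (∑ d, a d * (-(g p d))) / m := by
      rw [Finset.sum_div]
      exact Finset.sum_congr rfl fun d _ => by simp only [hg]; ring
    have e2 : ∑ d, (v d / m) * p.2.1 d = (∑ d, v d * p.2.1 d) / m := by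
      rw [Finset.sum_div]
      exact Finset.sum_congr rfl fun d _ => by ring
    rw [e1, e2]
    have e3 : ∑ d, a d * (-(g p d)) = -∑ d, a d * g p d := by
      rw [← Finset.sum_neg_distrib]
      exact Finset.sum_congr rfl fun d _ => by ring
    have e4 : ∑ d, v d * (-p.2.1 d) = -∑ d, v d * p.2.1 d := by
      rw [← Finset.sum_neg_distrib]
      exact Finset.sum_congr rfl fun d _ => by ring
    rw [e3, e4]
    field_simp
    ring
  rw [heq] at hdiv
  simpa only [hobj] using hdiv

/-- Strong duality for the SVM primal problem, computed in the extended reals: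
the sup over nonnegative multipliers of the inf of the Lagrangian equals the
inf of the primal objective over primal-feasible points. -/
theorem svm_lagrangian_strong_duality
    (H : Type*) [NormedAddCommGroup H] [InnerProductSpace ℝ H]
    (Γ : ℕ) (hΓ : 0 < Γ) (φ : Fin Γ → H) (l : Fin Γ → ℝ) (C : ℝ) (hC : 0 ≤ C) :
    (⨆ av : {av : (Fin Γ → ℝ) × (Fin Γ → ℝ) //
        (∀ d, 0 ≤ av.1 d) ∧ (∀ d, 0 ≤ av.2 d)},
      ⨅ p : H × (Fin Γ → ℝ) × ℝ,
        (((1 / 2) * ‖p.1‖ ^ 2 + C * ∑ d, p.2.1 d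
          - ∑ d, av.1.1 d * (l d * (⟪p.1, φ d⟫ + p.2.2) - 1 + p.2.1 d)
          - ∑ d, av.1.2 d * p.2.1 d : ℝ) : EReal))
      = ⨅ p : {p : H × (Fin Γ → ℝ) × ℝ //
          (∀ d, l d * (⟪p.1, φ d⟫ + p.2.2) ≥ 1 - p.2.1 d) ∧
          (∀ d, 0 ≤ p.2.1 d)},
        (((1 / 2) * ‖p.1.1‖ ^ 2 + C * ∑ d, p.1.2.1 d : ℝ) : EReal) := by
  classical
  apply le_antisymm
  · -- weak duality
    refine iSup_le ?_
    rintro ⟨⟨a, v⟩, ha, hv⟩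
    refine le_iInf ?_
    rintro ⟨q, hq1, hq2⟩
    refine le_trans (iInf_le _ q) ?_
    rw [EReal.coe_le_coe_iff]
    have h1 : 0 ≤ ∑ d, a d * (l d * (⟪q.1, φ d⟫ + q.2.2) - 1 + q.2.1 d) :=
      Finset.sum_nonneg fun d _ => mul_nonneg (ha d) (by have := hq1 d; linarith)
    have h2 : 0 ≤ ∑ d, v d * q.2.1 d :=
      Finset.sum_nonneg fun d _ => mul_nonneg (hv d) (hq2 d)
    simp only
    linarith
  · -- strong duality
    set rhs : EReal := ⨅ p : {p : H × (Fin Γ → ℝ) × ℝ //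
        (∀ d, l d * (⟪p.1, φ d⟫ + p.2.2) ≥ 1 - p.2.1 d) ∧
        (∀ d, 0 ≤ p.2.1 d)},
      (((1 / 2) * ‖p.1.1‖ ^ 2 + C * ∑ d, p.1.2.1 d : ℝ) : EReal) with hrhs
    have hp₀ : (∀ d, l d * (⟪(0:H), φ d⟫ + (0:ℝ)) ≥ 1 - (fun _ => (1:ℝ)) d) ∧
        (∀ d : Fin Γ, (0:ℝ) ≤ (fun _ => (1:ℝ)) d) := by
      constructor
      · intro d; simp
      · intro d; norm_num
    have hne_top : rhs ≠ ⊤ := by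
      refine ne_top_of_le_ne_top (EReal.coe_ne_top _) (iInf_le _ ⟨((0:H), fun _ => (1:ℝ), (0:ℝ)), hp₀⟩)
    have h0 : (0 : EReal) ≤ rhs := by
      refine le_iInf fun q => ?_
      have : (0:ℝ) ≤ (1 / 2) * ‖q.1.1‖ ^ 2 + C * ∑ d, q.1.2.1 d := by
        have := Finset.sum_nonneg (fun d (_ : d ∈ Finset.univ) => q.2.2 d)
        positivity
      exact_mod_cast this
    have hne_bot : rhs ≠ ⊥ := by
      intro h; rw [h] at h0; exact absurd h0 (by simp)
    set P : ℝ := rhs.toReal with hP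
    have hPeq : (P : EReal) = rhs := EReal.coe_toReal hne_top hne_bot
    have hlb : ∀ p : H × (Fin Γ → ℝ) × ℝ,
        (∀ d, l d * (⟪p.1, φ d⟫ + p.2.2) ≥ 1 - p.2.1 d) → (∀ d, 0 ≤ p.2.1 d) →
        P ≤ (1 / 2) * ‖p.1‖ ^ 2 + C * ∑ d, p.2.1 d := by
      intro p h1 h2
      have := iInf_le (fun q : {p : H × (Fin Γ → ℝ) × ℝ //
          (∀ d, l d * (⟪p.1, φ d⟫ + p.2.2) ≥ 1 - p.2.1 d) ∧
          (∀ d, 0 ≤ p.2.1 d)} => (((1 / 2) * ‖q.1.1‖ ^ 2 + C * ∑ d, q.1.2.1 d : ℝ) : EReal))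
          ⟨p, h1, h2⟩
      rw [← hrhs, ← hPeq] at this
      exact_mod_cast this
    obtain ⟨a, v, ha, hv, hL⟩ := svm_key H Γ φ l C hC P hlb
    rw [← hPeq]
    refine le_trans ?_ (le_iSup _ (⟨(a, v), ha, hv⟩ : {av : (Fin Γ → ℝ) × (Fin Γ → ℝ) //
      (∀ d, 0 ≤ av.1 d) ∧ (∀ d, 0 ≤ av.2 d)}))
    refine le_iInf fun p => ?_
    exact_mod_cast hL p
end

section
/- (Correctness of the Benders termination criterion.) Let X ⊆ ℝ^{n₁} be nonempty, c ∈ ℝ^{n₁}, and for each scenario ω ∈ {1,…,S} let p_ω ≥ 0, and let W_ω, T_ω, h_ω, q_ω and Q_ω be as in the two-stage stochastic program, with complete recourse with attainment: for every x ∈ X and every ω there exists y ≥ 0 with W_ω·y = h_ω − T_ω·x achieving q_ωᵀy = Q_ω(x). Let V_ω ⊆ ℝ^{m₂} consist of dual-feasible points (W_ωᵀν ≤ q_ω for all ν ∈ V_ω), and suppose (x̂, θ̂) is an optimal solution of the relaxed master problem, i.e., it is RMP-feasible and its objective cᵀx̂ + ∑_ω p_ω·θ̂_ω is a lower bound for the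 RMP objective over all RMP-feasible points. If θ̂_ω ≥ Q_ω(x̂) for every ω, then x̂ is optimal for the original problem: cᵀx̂ + ∑_{ω=1}^{S} p_ω·Q_ω(x̂) = inf_{x ∈ X} (cᵀx + ∑_{ω=1}^{S} p_ω·Q_ω(x)). -/
open Matrix

/-- Correctness of the Benders termination criterion: if `(xhat, θhat)` is an
optimal solution of the relaxed master problem and `θhat_ω ≥ Q_ω(xhat)` for every
scenario `ω`, then `xhat` is optimal for the original two-stage problem. -/
theorem benders_termination_correct
    (n₁ n₂ m₂ S : ℕ)
    (X : Set (Fin n₁ → ℝ)) (hX : X.Nonempty)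
    (c : Fin n₁ → ℝ) (p : Fin S → ℝ) (hp : ∀ ω, 0 ≤ p ω)
    (W : Fin S → Matrix (Fin m₂) (Fin n₂) ℝ)
    (T : Fin S → Matrix (Fin m₂) (Fin n₁) ℝ)
    (h : Fin S → Fin m₂ → ℝ) (q : Fin S → Fin n₂ → ℝ)
    (Q : Fin S → (Fin n₁ → ℝ) → ℝ)
    (hQ : ∀ ω x, Q ω x = sInf {val : ℝ | ∃ y : Fin n₂ → ℝ,
        0 ≤ y ∧ (W ω).mulVec y = h ω - (T ω).mulVec x ∧ val = q ω ⬝ᵥ y})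
    (hrecourse : ∀ x ∈ X, ∀ ω, ∃ y : Fin n₂ → ℝ,
        0 ≤ y ∧ (W ω).mulVec y = h ω - (T ω).mulVec x ∧ q ω ⬝ᵥ y = Q ω x)
    (V : Fin S → Set (Fin m₂ → ℝ))
    (hV : ∀ ω, ∀ ν ∈ V ω, (W ω)ᵀ.mulVec ν ≤ q ω)
    (xhat : Fin n₁ → ℝ) (θhat : Fin S → ℝ)
    (hxhatX : xhat ∈ X)
    (hxhatfeas : ∀ ω, ∀ ν ∈ V ω, θhat ω ≥ ν ⬝ᵥ (h ω - (T ω).mulVec xhat))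
    (hopt : ∀ (x : Fin n₁ → ℝ) (θ : Fin S → ℝ), x ∈ X →
        (∀ ω, ∀ ν ∈ V ω, θ ω ≥ ν ⬝ᵥ (h ω - (T ω).mulVec x)) →
        c ⬝ᵥ xhat + ∑ ω, p ω * θhat ω ≤ c ⬝ᵥ x + ∑ ω, p ω * θ ω)
    (hgap : ∀ ω, θhat ω ≥ Q ω xhat) :
    c ⬝ᵥ xhat + ∑ ω, p ω * Q ω xhat
      = sInf {val : ℝ | ∃ x ∈ X, val = c ⬝ᵥ x + ∑ ω, p ω * Q ω x} := by
  -- Lower bound: F(xhat) ≤ F(x) for all x ∈ X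
  have key : ∀ x ∈ X, c ⬝ᵥ xhat + ∑ ω, p ω * Q ω xhat
      ≤ c ⬝ᵥ x + ∑ ω, p ω * Q ω x := by
    intro x hx
    have hfeas : ∀ ω, ∀ ν ∈ V ω, (fun ω => Q ω x) ω ≥ ν ⬝ᵥ (h ω - (T ω).mulVec x) := by
      intro ω ν hν
      obtain ⟨y, hy0, hWy, hqy⟩ := hrecourse x hx ω
      have h1 : ν ⬝ᵥ (h ω - (T ω).mulVec x) = ((W ω)ᵀ.mulVec ν) ⬝ᵥ y := by
        rw [← hWy, Matrix.dotProduct_mulVec, Matrix.mulVec_transpose]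
      have h2 : ((W ω)ᵀ.mulVec ν) ⬝ᵥ y ≤ q ω ⬝ᵥ y := by
        apply Finset.sum_le_sum
        intro i _
        exact mul_le_mul_of_nonneg_right (hV ω ν hν i) (hy0 i)
      simpa [h1, hqy] using h2
    have := hopt x (fun ω => Q ω x) hx hfeas
    have hmid : ∑ ω, p ω * Q ω xhat ≤ ∑ ω, p ω * θhat ω :=
      Finset.sum_le_sum fun ω _ => mul_le_mul_of_nonneg_left (hgap ω) (hp ω)
    linarith
  apply le_antisymm
  · refine le_csInf ⟨_, ⟨xhat, hxhatX, rfl⟩⟩ ?_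
    rintro b ⟨x, hx, rfl⟩
    exact key x hx
  · refine csInf_le ⟨c ⬝ᵥ xhat + ∑ ω, p ω * Q ω xhat, ?_⟩ ⟨xhat, hxhatX, rfl⟩
    rintro b ⟨x, hx, rfl⟩
    exact key x hx
end
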